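/- For all integers d ≥ 2, m ≥ 1, n with η = n/m ≥ 6 when m=1 and η ≥ 4 when m ≥ 2, and all integers ζ ≥ 2: (2d^m/(d^{2m}+1))^{2^ζ} ≤ (d^m/(d^{2m}+1))² · (2 + 2·cos(2π/η)). -/
import Mathlib
set_option maxHeartbeats 1000000


theorem stmt_7 (d m η ζ : ℕ) (hd : 2 ≤ d) (hm : 1 ≤ m)
    (hη : Even η) (hη4 : 4 ≤ η) (hη6 : m = 1 → 6 ≤ η) (hζ : 2 ≤ ζ) :
    (2 * (d : ℝ) ^ m / ((d : ℝ) ^ (2 * m) + 1)) ^ (2 ^ ζ) ≤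
      ((d : ℝ) ^ m / ((d : ℝ) ^ (2 * m) + 1)) ^ 2 *
        (2 + 2 * Real.cos (2 * Real.pi / (η : ℝ))) := by
  have hd2 : (2:ℝ) ≤ (d:ℝ) := by exact_mod_cast hd
  set t : ℝ := (d:ℝ)^m with ht_def
  have ht : (2:ℝ) ≤ t := by
    calc (2:ℝ) = 2^1 := (pow_one 2).symm
    _ ≤ (2:ℝ)^m := pow_le_pow_right₀ one_le_two hm
    _ ≤ (d:ℝ)^m := pow_le_pow_left₀ (by norm_num) hd2 m
  have ht0 : (0:ℝ) < t := lt_of_lt_of_le two_pos ht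
  have hden : (0:ℝ) < t^2 + 1 := by positivity
  have hsq : (d:ℝ)^(2*m) = t^2 := by
    rw [ht_def, ← pow_mul, mul_comm]
  set x : ℝ := t / (t^2+1) with hx_def
  have hx0 : (0:ℝ) < x := div_pos ht0 hden
  have h2x1 : 2 * x ≤ 1 := by
    rw [show 2 * x = 2 * t / (t^2+1) from mul_div_assoc 2 t _ |>.symm,
      div_le_one hden]
    nlinarith [sq_nonneg (t-1)]
  have hrw1 : 2 * (d:ℝ)^m / ((d:ℝ)^(2*m)+1) = 2 * x := by
    rw [hsq, hx_def, mul_div_assoc]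
  have hrw2 : (d:ℝ)^m / ((d:ℝ)^(2*m)+1) = x := by
    rw [hsq, hx_def]
  rw [hrw1, hrw2]
  set c : ℝ := Real.cos (2 * Real.pi / (η:ℝ)) with hc_def
  have hη0 : (0:ℝ) < (η:ℝ) := by positivity
  have hθ0 : (0:ℝ) ≤ 2 * Real.pi / (η:ℝ) := by positivity
  have hθ2 : 2 * Real.pi / (η:ℝ) ≤ 2 * Real.pi / 4 := by
    apply div_le_div_of_nonneg_left (by positivity) (by norm_num)
    exact_mod_cast hη4
  have hc0 : (0:ℝ) ≤ c := by
    apply Real.cos_nonneg_of_mem_Icc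
    constructor
    · linarith [Real.pi_pos]
    · linarith [hθ2]
  have hstep1 : (2*x)^(2^ζ) ≤ (2*x)^4 := by
    apply pow_le_pow_of_le_one (by positivity) h2x1
    calc 4 = 2^2 := by norm_num
    _ ≤ 2^ζ := Nat.pow_le_pow_right (by norm_num) hζ
  refine hstep1.trans ?_
  rcases eq_or_lt_of_le hm with hm1 | hm2
  · -- m = 1 case: η ≥ 6, cos ≥ 1/2, x ≤ 2/5
    have hη6' : (6:ℝ) ≤ (η:ℝ) := by exact_mod_cast hη6 hm1.symm
    have hθ3 : 2 * Real.pi / (η:ℝ) ≤ Real.pi / 3 := by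
      rw [div_le_div_iff₀ hη0 (by norm_num)]
      nlinarith [Real.pi_pos]
    have hc12 : (1:ℝ)/2 ≤ c := by
      rw [hc_def, ← Real.cos_pi_div_three]
      apply Real.cos_le_cos_of_nonneg_of_le_pi hθ0 (by linarith [Real.pi_pos]) hθ3
    have hx25 : x ≤ 2/5 := by
      rw [hx_def, div_le_iff₀ hden]
      nlinarith
    have hxx : x * x ≤ 4/25 := by
      calc x * x ≤ (2/5) * (2/5) := mul_le_mul hx25 hx25 hx0.le (by norm_num)
      _ = 4/25 := by norm_num
    nlinarith [sq_nonneg x, mul_nonneg (sq_nonneg x) (sub_nonneg.mpr hxx)]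
  · -- m ≥ 2 case: t ≥ 4, x ≤ 4/17, cos ≥ 0
    have hm2' : 2 ≤ m := hm2
    have ht4 : (4:ℝ) ≤ t := by
      calc (4:ℝ) = 2^2 := by norm_num
      _ ≤ (2:ℝ)^m := pow_le_pow_right₀ one_le_two hm2'
      _ ≤ (d:ℝ)^m := pow_le_pow_left₀ (by norm_num) hd2 m
    have hx417 : x ≤ 4/17 := by
      rw [hx_def, div_le_iff₀ hden]
      nlinarith
    have hxx : x * x ≤ 16/289 := by
      calc x * x ≤ (4/17) * (4/17) := mul_le_mul hx417 hx417 hx0.le (by norm_num)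
      _ = 16/289 := by norm_num
    nlinarith [sq_nonneg x, mul_nonneg (sq_nonneg x) (sub_nonneg.mpr hxx)]
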